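/- Let E be a finite set and L ⊆ V_E a Lagrangian subspace. Then ν_E(L) is a binary delta-matroid on E: there exist a symmetric E×E matrix A over 𝔽₂ and a subset E' ⊆ E such that the feasible sets of ν_E(L) are exactly {U Δ E' : U ⊆ E, A|_U invertible}. In particular, ν_E(L) is a proper set system satisfying the symmetric exchange axiom. -/

import Mathlib

open Finset
open scoped symmDiff

variable {E : Type*} [Fintype E] [DecidableEq E]

/-- The symplectic vector space `V_E = (E → 𝔽₂) × (E → 𝔽₂)`. -/
abbrev V (E : Type*) : Type _ := (E → ZMod 2) × (E → ZMod 2)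

/-- Basis vector `e`. -/
def baseV (e : E) : V E := (Pi.single e 1, 0)

/-- Basis vector `e^∨`. -/
def dualV (e : E) : V E := (0, Pi.single e 1)

/-- The symplectic form on `V E`. -/
def omegaForm (u v : V E) : ZMod 2 := ∑ e, (u.1 e * v.2 e + u.2 e * v.1 e)

/-- A subspace is Lagrangian if the form vanishes on it and its dimension is `|E|`. -/
def IsLagrangian (L : Submodule (ZMod 2) (V E)) : Prop :=
  (∀ u ∈ L, ∀ v ∈ L, omegaForm u v = 0) ∧
    Module.finrank (ZMod 2) L = Fintype.card E

/-- The span of `{e^∨ : e ∈ Y} ∪ {e : e ∈ E \ Y}`. -/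
def coordSpan (Y : Finset E) : Submodule (ZMod 2) (V E) :=
  Submodule.span (ZMod 2)
    ((fun e => dualV e) '' (Y : Set E) ∪ (fun e => baseV e) '' ((Yᶜ : Finset E) : Set E))

/-- `Y` is feasible for `L` iff `L ∩ ⟨Y^∨ ⊔ (E \ Y)⟩ = 0`. -/
def Feasible (L : Submodule (ZMod 2) (V E)) (Y : Finset E) : Prop :=
  L ⊓ coordSpan Y = ⊥

/-- The set system `ν_E(L)`. -/
def nu (L : Submodule (ZMod 2) (V E)) : Set (Finset E) := {Y | Feasible L Y}

/-- The nondegeneracy set system of a matrix `A`. -/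
def Phi (A : Matrix E E (ZMod 2)) : Set (Finset E) :=
  {U : Finset E | IsUnit (A.submatrix (fun i : ↥U => (i : E)) (fun j : ↥U => (j : E))).det}

/-- The symmetric exchange axiom. -/
def SEAxiom (Φ : Set (Finset E)) : Prop :=
  ∀ φ₁ ∈ Φ, ∀ φ₂ ∈ Φ, ∀ e ∈ φ₁ ∆ φ₂, ∃ e' ∈ φ₁ ∆ φ₂, φ₁ ∆ ({e, e'} : Finset E) ∈ Φ

/-- Binary delta-matroid: a twist of a nondegeneracy set system. -/
def IsBinaryDM (Φ : Set (Finset E)) : Prop :=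
  ∃ (A : Matrix E E (ZMod 2)) (E' : Finset E), A.IsSymm ∧ Φ = (· ∆ E') '' Phi A

/-- The involution `σ_e` swapping `e` and `e^∨`. -/
def sigmaE (e : E) : V E →ₗ[ZMod 2] V E where
  toFun u := (fun f => if f = e then u.2 f else u.1 f, fun f => if f = e then u.1 f else u.2 f)
  map_add' u v := by ext f <;> dsimp <;> split <;> rfl
  map_smul' c u := by ext f <;> dsimp <;> split <;> rfl

/-- Composition of the `σ_e` over `e ∈ E'`. -/
def sigmaSet (E' : Finset E) : V E →ₗ[ZMod 2] V E where
  toFun u := (fun f => if f ∈ E' then u.2 f else u.1 f, fun f => if f ∈ E' then u.1 f else u.2 f)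
  map_add' u v := by ext f <;> dsimp <;> split <;> rfl
  map_smul' c u := by ext f <;> dsimp <;> split <;> rfl

/-- A Lagrangian subspace is graphic if for every `e` there is `v_e ∈ L` with
`ω(v_e,e)=1` and `ω(v_e,e')=0` for `e' ≠ e`. -/
def IsGraphic (L : Submodule (ZMod 2) (V E)) : Prop :=
  ∀ e : E, ∃ v ∈ L, omegaForm v (baseV e) = 1 ∧
    ∀ e' : E, e' ≠ e → omegaForm v (baseV e') = 0

/-- The vector `e^∨ + Σ_{e'} A_{e,e'} e'`. -/
def rowVec (A : Matrix E E (ZMod 2)) (e : E) : V E := (A e, Pi.single e 1)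

/-- The subspace spanned by the vectors `rowVec A e`, `e ∈ E`. -/
def graphOf (A : Matrix E E (ZMod 2)) : Submodule (ZMod 2) (V E) :=
  Submodule.span (ZMod 2) (Set.range (rowVec A))

/-- The first Vassiliev move: `e^∨ ↦ e^∨ + e'`, `e'^∨ ↦ e'^∨ + e`, fixing other basis vectors. -/
def vassiliev1 (e e' : E) : V E →ₗ[ZMod 2] V E where
  toFun u := (fun f => u.1 f + (if f = e' then u.2 e else 0) + (if f = e then u.2 e' else 0), u.2)
  map_add' u v := by ext f <;> dsimp <;> split_ifs <;> ring
  map_smul' c u := by ext f <;> dsimp <;> split_ifs <;> ring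

set_option linter.unusedSectionVars false

/- ### auxiliary development -/

def Psub (Y : Finset E) : Submodule (ZMod 2) (V E) where
  carrier := {v | (∀ e ∈ Y, v.1 e = 0) ∧ ∀ e ∉ Y, v.2 e = 0}
  add_mem' := fun {a b} ha hb => ⟨fun e he => by simp [ha.1 e he, hb.1 e he],
    fun e he => by simp [ha.2 e he, hb.2 e he]⟩
  zero_mem' := ⟨fun _ _ => rfl, fun _ _ => rfl⟩
  smul_mem' := fun c a ha => ⟨fun e he => by simp [ha.1 e he], fun e he => by simp [ha.2 e he]⟩

theorem mem_Psub {Y : Finset E} {v : V E} :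
    v ∈ Psub Y ↔ (∀ e ∈ Y, v.1 e = 0) ∧ ∀ e ∉ Y, v.2 e = 0 := Iff.rfl

theorem coordSpan_eq (Y : Finset E) : coordSpan Y = Psub Y := by
  apply le_antisymm
  · rw [coordSpan, Submodule.span_le]
    rintro v (⟨e, he, rfl⟩ | ⟨e, he, rfl⟩)
    · exact ⟨fun f _ => rfl, fun f hf => Pi.single_eq_of_ne (fun h : f = e => hf (h ▸ he)) 1⟩
    · simp only [Finset.coe_compl, Set.mem_compl_iff, Finset.mem_coe] at he
      exact ⟨fun f hf => Pi.single_eq_of_ne (fun h : f = e => he (h ▸ hf)) 1, fun f _ => rfl⟩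
  · intro v hv
    have hrep : v = ∑ e, (v.1 e • baseV e + v.2 e • dualV e) := by
      apply Prod.ext <;> funext f <;>
        simp [baseV, dualV, Prod.fst_sum, Prod.snd_sum, Finset.sum_apply, Pi.single_apply,
          mul_ite, Finset.sum_ite_eq', Finset.sum_add_distrib]
    rw [hrep]
    refine Submodule.sum_mem _ fun e _ => Submodule.add_mem _ ?_ ?_
    · by_cases he : e ∈ Y
      · rw [hv.1 e he]; simp
      · exact Submodule.smul_mem _ _ (Submodule.subset_span (Or.inr ⟨e, by simp [he], rfl⟩))
    · by_cases he : e ∈ Y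
      · exact Submodule.smul_mem _ _ (Submodule.subset_span (Or.inl ⟨e, he, rfl⟩))
      · rw [hv.2 e he]; simp

theorem omega_erase {Y : Finset E} {e : E} (he : e ∈ Y) {v w : V E}
    (hv : v ∈ Psub Y) (hw : w ∈ Psub (Y.erase e)) :
    omegaForm v w = v.2 e * w.1 e := by
  rw [omegaForm, Finset.sum_eq_single e]
  · rw [hv.1 e he]; ring
  · intro g _ hg
    by_cases hgY : g ∈ Y
    · rw [hv.1 g hgY, hw.1 g (Finset.mem_erase.mpr ⟨hg, hgY⟩)]; ring
    · rw [hv.2 g hgY, hw.2 g (fun h => hgY (Finset.mem_of_mem_erase h))]; ring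
  · intro h; exact absurd (Finset.mem_univ e) h

theorem omega_insert {Y : Finset E} {e : E} (he : e ∉ Y) {v w : V E}
    (hv : v ∈ Psub Y) (hw : w ∈ Psub (insert e Y)) :
    omegaForm v w = v.1 e * w.2 e := by
  rw [omegaForm, Finset.sum_eq_single e]
  · rw [hv.2 e he, hw.1 e (Finset.mem_insert_self e Y)]; ring
  · intro g _ hg
    by_cases hgY : g ∈ Y
    · rw [hv.1 g hgY, hw.1 g (Finset.mem_insert_of_mem hgY)]; ring
    · rw [hv.2 g hgY, hw.2 g (fun h => (Finset.mem_insert.mp h).elim hg hgY)]; ring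
  · intro h; exact absurd (Finset.mem_univ e) h

theorem exists_feasible (L : Submodule (ZMod 2) (V E))
    (hiso : ∀ u ∈ L, ∀ v ∈ L, omegaForm u v = 0) :
    ∃ Y : Finset E, L ⊓ Psub Y = ⊥ := by
  suffices h : ∀ (n : ℕ) (Y : Finset E), Module.finrank (ZMod 2) ↥(L ⊓ Psub Y) ≤ n →
      ∃ Y : Finset E, L ⊓ Psub Y = ⊥ from h _ ∅ le_rfl
  intro n
  induction n with
  | zero =>
    intro Y hY
    exact ⟨Y, Submodule.finrank_eq_zero.mp (Nat.le_zero.mp hY)⟩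
  | succ n ih =>
    intro Y hY
    by_cases hbot : L ⊓ Psub Y = ⊥
    · exact ⟨Y, hbot⟩
    obtain ⟨v, hv, hv0⟩ := Submodule.exists_mem_ne_zero_of_ne_bot hbot
    have hvL : v ∈ L := hv.1
    have hvP : v ∈ Psub Y := hv.2
    have hcoord : (∃ e ∈ Y, v.2 e ≠ 0) ∨ ∃ e, e ∉ Y ∧ v.1 e ≠ 0 := by
      by_contra hc
      push_neg at hc
      apply hv0
      have h1 : v.1 = 0 := funext fun f => by
        by_cases hf : f ∈ Y
        exacts [hvP.1 f hf, hc.2 f hf]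
      have h2 : v.2 = 0 := funext fun f => by
        by_cases hf : f ∈ Y
        exacts [hc.1 f hf, hvP.2 f hf]
      exact Prod.ext h1 h2
    rcases hcoord with ⟨e, heY, hne⟩ | ⟨e, heY, hne⟩
    · have hle : L ⊓ Psub (Y.erase e) ≤ L ⊓ Psub Y := by
        rintro w ⟨hwL, hwP⟩
        have hω := hiso v hvL w hwL
        rw [omega_erase heY hvP hwP] at hω
        have hw1 : w.1 e = 0 := (mul_eq_zero.mp hω).resolve_left hne
        refine ⟨hwL, fun f hf => ?_, fun f hf => hwP.2 f (fun h => hf (Finset.mem_of_mem_erase h))⟩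
        by_cases hfe : f = e
        · rw [hfe]; exact hw1
        · exact hwP.1 f (Finset.mem_erase.mpr ⟨hfe, hf⟩)
      have hvnot : v ∉ L ⊓ Psub (Y.erase e) := fun hmem =>
        hne (hmem.2.2 e (Finset.notMem_erase e Y))
      have hlt : L ⊓ Psub (Y.erase e) < L ⊓ Psub Y :=
        lt_of_le_of_ne hle (fun h => hvnot (by rw [h]; exact hv))
      have := Submodule.finrank_lt_finrank_of_lt hlt
      exact ih (Y.erase e) (by omega)
    · have hle : L ⊓ Psub (insert e Y) ≤ L ⊓ Psub Y := by
        rintro w ⟨hwL, hwP⟩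
        have hω := hiso v hvL w hwL
        rw [omega_insert heY hvP hwP] at hω
        have hw2 : w.2 e = 0 := (mul_eq_zero.mp hω).resolve_left hne
        refine ⟨hwL, fun f hf => hwP.1 f (Finset.mem_insert_of_mem hf), fun f hf => ?_⟩
        by_cases hfe : f = e
        · rw [hfe]; exact hw2
        · exact hwP.2 f (fun h => (Finset.mem_insert.mp h).elim hfe hf)
      have hvnot : v ∉ L ⊓ Psub (insert e Y) := fun hmem =>
        hne (hmem.2.1 e (Finset.mem_insert_self e Y))
      have hlt : L ⊓ Psub (insert e Y) < L ⊓ Psub Y :=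
        lt_of_le_of_ne hle (fun h => hvnot (by rw [h]; exact hv))
      have := Submodule.finrank_lt_finrank_of_lt hlt
      exact ih (insert e Y) (by omega)

theorem sigma_invol (E' : Finset E) (u : V E) : sigmaSet E' (sigmaSet E' u) = u := by
  apply Prod.ext <;> funext f <;> by_cases hf : f ∈ E' <;> simp [sigmaSet, hf]

theorem sigma_inj (E' : Finset E) : Function.Injective (sigmaSet E') :=
  Function.LeftInverse.injective (sigma_invol E')

theorem omega_sigma (E' : Finset E) (u v : V E) :
    omegaForm (sigmaSet E' u) (sigmaSet E' v) = omegaForm u v := by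
  refine Finset.sum_congr rfl fun g _ => ?_
  by_cases hg : g ∈ E' <;> simp [sigmaSet, hg] <;> ring

theorem sigma_Psub (E' Y : Finset E) (v : V E) :
    sigmaSet E' v ∈ Psub (Y ∆ E') ↔ v ∈ Psub Y := by
  have h : ∀ (P : V E) (Y' : Finset E),
      P ∈ Psub Y' ↔ ∀ f, (f ∈ Y' → P.1 f = 0) ∧ (f ∉ Y' → P.2 f = 0) := fun P Y' =>
    ⟨fun h f => ⟨h.1 f, h.2 f⟩, fun h => ⟨fun f => (h f).1, fun f => (h f).2⟩⟩
  rw [h, h]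
  apply forall_congr'
  intro f
  by_cases h1 : f ∈ E' <;> by_cases h2 : f ∈ Y <;>
    simp [sigmaSet, Finset.mem_symmDiff, h1, h2]

theorem map_sigma_Psub (E' Y : Finset E) :
    (Psub Y).map (sigmaSet E') = Psub (Y ∆ E') := by
  apply le_antisymm
  · rintro w ⟨v, hv, rfl⟩
    exact (sigma_Psub E' Y v).mpr hv
  · intro w hw
    refine ⟨sigmaSet E' w, ?_, sigma_invol E' w⟩
    refine (sigma_Psub E' Y (sigmaSet E' w)).mp ?_
    rw [sigma_invol]; exact hw

theorem feasible_map (L : Submodule (ZMod 2) (V E)) (E' Y : Finset E) :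
    (L.map (sigmaSet E') ⊓ Psub Y = ⊥) ↔ (L ⊓ Psub (Y ∆ E') = ⊥) := by
  have hmapP : (Psub (Y ∆ E')).map (sigmaSet E') = Psub Y := by
    rw [map_sigma_Psub, symmDiff_symmDiff_cancel_right]
  rw [← hmapP, ← Submodule.map_inf _ (sigma_inj E')]
  constructor
  · intro h
    rw [Submodule.eq_bot_iff]
    intro x hx
    have : sigmaSet E' x ∈ Submodule.map (sigmaSet E') (L ⊓ Psub (Y ∆ E')) := ⟨x, hx, rfl⟩
    rw [h, Submodule.mem_bot] at this
    have := congrArg (sigmaSet E') this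
    rwa [sigma_invol, map_zero] at this
  · intro h; rw [h, Submodule.map_bot]

def sigmaEquiv (E' : Finset E) : V E ≃ₗ[ZMod 2] V E :=
  LinearEquiv.ofLinear (sigmaSet E') (sigmaSet E')
    (LinearMap.ext (sigma_invol E')) (LinearMap.ext (sigma_invol E'))

theorem isLagrangian_map (L : Submodule (ZMod 2) (V E)) (hL : IsLagrangian L) (E' : Finset E) :
    IsLagrangian (L.map (sigmaSet E')) := by
  constructor
  · rintro u ⟨u', hu', rfl⟩ v ⟨v', hv', rfl⟩
    rw [omega_sigma]; exact hL.1 u' hu' v' hv'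
  · have heq : L.map (sigmaSet E')
        = L.map ((sigmaEquiv E' : V E ≃ₗ[ZMod 2] V E) : V E →ₗ[ZMod 2] V E) := rfl
    rw [heq, LinearEquiv.finrank_map_eq]
    exact hL.2

def Tmap (A : Matrix E E (ZMod 2)) : (E → ZMod 2) →ₗ[ZMod 2] V E where
  toFun c := (Matrix.vecMul c A, c)
  map_add' c d := by
    apply Prod.ext
    · simp [Matrix.add_vecMul]
    · rfl
  map_smul' r c := by
    apply Prod.ext
    · simp [Matrix.smul_vecMul]
    · rfl

theorem graphOf_eq (A : Matrix E E (ZMod 2)) : graphOf A = LinearMap.range (Tmap A) := by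
  apply le_antisymm
  · rw [graphOf, Submodule.span_le]
    rintro v ⟨e, rfl⟩
    refine ⟨Pi.single e 1, ?_⟩
    apply Prod.ext
    · funext f
      simp [Tmap, rowVec, Matrix.vecMul, dotProduct, Pi.single_apply, ite_mul,
        Finset.sum_ite_eq]
    · rfl
  · rintro v ⟨c, rfl⟩
    have hrep : Tmap A c = ∑ e, c e • rowVec A e := by
      apply Prod.ext <;> funext f <;>
        simp [Tmap, rowVec, Matrix.vecMul, dotProduct, Prod.fst_sum, Prod.snd_sum,
          Finset.sum_apply, Pi.single_apply, mul_ite, Finset.sum_ite_eq']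
    rw [hrep]
    exact Submodule.sum_mem _ fun e _ =>
      Submodule.smul_mem _ _ (Submodule.subset_span ⟨e, rfl⟩)

theorem vecMul_restrict (A : Matrix E E (ZMod 2)) (U : Finset E) (c : E → ZMod 2)
    (hc : ∀ g ∉ U, c g = 0) (j : ↥U) :
    Matrix.vecMul (fun i : ↥U => c i)
      (A.submatrix (fun i : ↥U => (i : E)) (fun j : ↥U => (j : E))) j
      = Matrix.vecMul c A (j : E) := by
  rw [Matrix.vecMul, Matrix.vecMul, dotProduct, dotProduct]
  simp only [Matrix.submatrix_apply]
  rw [Finset.sum_coe_sort U (fun g => c g * A g (j : E))]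
  exact Finset.sum_subset (Finset.subset_univ U) (fun g _ hg => by rw [hc g hg, zero_mul])

theorem feasible_graphOf (A : Matrix E E (ZMod 2)) (U : Finset E) :
    graphOf A ⊓ Psub U = ⊥ ↔ U ∈ Phi A := by
  rw [Phi, Set.mem_setOf_eq, isUnit_iff_ne_zero, Ne, ← Matrix.exists_vecMul_eq_zero_iff]
  constructor
  · rintro hbot ⟨c', hc', hc0⟩
    set c : E → ZMod 2 := fun g => if h : g ∈ U then c' ⟨g, h⟩ else 0 with hcdef
    have hsupp : ∀ g ∉ U, c g = 0 := fun g hg => dif_neg hg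
    have hrestr : (fun i : ↥U => c i) = c' := funext fun i => by
      rw [hcdef]; simp only [dif_pos i.2]
    have hmem : Tmap A c ∈ graphOf A ⊓ Psub U := by
      refine ⟨by rw [graphOf_eq]; exact ⟨c, rfl⟩, fun f hf => ?_, fun f hf => hsupp f hf⟩
      have := vecMul_restrict A U c hsupp ⟨f, hf⟩
      rw [hrestr, hc0] at this
      exact this.symm
    rw [hbot, Submodule.mem_bot] at hmem
    apply hc'
    funext i
    have := congrFun (congrArg Prod.snd hmem) (i : E)
    rw [← hrestr]
    simpa [Tmap] using this
  · intro hne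
    rw [Submodule.eq_bot_iff]
    rintro v ⟨hvG, hvP⟩
    rw [graphOf_eq] at hvG
    obtain ⟨c, rfl⟩ := hvG
    have hsupp : ∀ g ∉ U, c g = 0 := fun g hg => hvP.2 g hg
    have hc0 : (fun i : ↥U => c i) = 0 := by
      by_contra h
      refine hne ⟨_, h, ?_⟩
      funext j
      rw [vecMul_restrict A U c hsupp j]
      exact hvP.1 (j : E) j.2
    have hc : c = 0 := funext fun g => by
      by_cases hg : g ∈ U
      · exact congrFun hc0 ⟨g, hg⟩
      · exact hsupp g hg
    rw [hc, map_zero]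

theorem zmod2_add_eq_zero {a b : ZMod 2} (h : a + b = 0) : a = b := by revert a b; decide

theorem graph_rep (L : Submodule (ZMod 2) (V E)) (hL : IsLagrangian L)
    (h0 : L ⊓ Psub ∅ = ⊥) : ∃ A : Matrix E E (ZMod 2), A.IsSymm ∧ L = graphOf A := by
  set π : L →ₗ[ZMod 2] (E → ZMod 2) :=
    (LinearMap.snd (ZMod 2) (E → ZMod 2) (E → ZMod 2)).comp L.subtype with hπ
  have hker : LinearMap.ker π = ⊥ := by
    rw [LinearMap.ker_eq_bot']
    intro m hm
    have hmem : (m : V E) ∈ L ⊓ Psub ∅ :=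
      ⟨m.2, fun f hf => absurd hf (Finset.notMem_empty f), fun f _ => congrFun hm f⟩
    rw [h0, Submodule.mem_bot] at hmem
    exact Subtype.ext hmem
  have hsurj : Function.Surjective π := by
    refine (LinearMap.injective_iff_surjective_of_finrank_eq_finrank ?_).mp
      (LinearMap.ker_eq_bot.mp hker)
    rw [hL.2, Module.finrank_fintype_fun_eq_card]
  choose vfun hvfun using fun e => hsurj (Pi.single e 1)
  set A : Matrix E E (ZMod 2) := fun e => (vfun e : V E).1 with hA
  have hrow : ∀ e, rowVec A e = ↑(vfun e) := fun e => Prod.ext rfl (hvfun e).symm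
  have hrowmem : ∀ e, rowVec A e ∈ L := fun e => (hrow e) ▸ (vfun e).2
  have homega : ∀ e f, omegaForm (rowVec A e) (rowVec A f) = A e f + A f e := by
    intro e f
    rw [omegaForm]
    simp [rowVec, Pi.single_apply, mul_ite, ite_mul, Finset.sum_add_distrib,
      Finset.sum_ite_eq, Finset.sum_ite_eq']
  have hsym : A.IsSymm := by
    ext e f
    rw [Matrix.transpose_apply]
    exact zmod2_add_eq_zero (by rw [← homega f e]; exact hL.1 _ (hrowmem f) _ (hrowmem e))
  refine ⟨A, hsym, le_antisymm ?_ ?_⟩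
  · intro v hv
    have hsum : v - ∑ e, v.2 e • rowVec A e ∈ L ⊓ Psub ∅ := by
      refine ⟨Submodule.sub_mem _ hv
        (Submodule.sum_mem _ fun e _ => Submodule.smul_mem _ _ (hrowmem e)),
        fun f hf => absurd hf (Finset.notMem_empty f), fun f _ => ?_⟩
      simp [rowVec, Prod.snd_sum, Finset.sum_apply, Pi.single_apply, mul_ite,
        Finset.sum_ite_eq']
    rw [h0, Submodule.mem_bot, sub_eq_zero] at hsum
    rw [hsum]
    exact Submodule.sum_mem _ fun e _ =>
      Submodule.smul_mem _ _ (Submodule.subset_span ⟨e, rfl⟩)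
  · rw [graphOf, Submodule.span_le]
    rintro w ⟨e, rfl⟩
    exact hrowmem e

theorem zmod2_eq_one {a : ZMod 2} (h : a ≠ 0) : a = 1 := by revert a; decide

theorem exchange_graph (A : Matrix E E (ZMod 2)) (hA : A.IsSymm) (U : Finset E)
    (hU : graphOf A ⊓ Psub U = ⊥) {e : E} (he : e ∈ U) :
    ∃ e' ∈ U, graphOf A ⊓ Psub ({e, e'} : Finset E) = ⊥ := by
  by_cases hee : A e e = 1
  · refine ⟨e, he, ?_⟩
    rw [Submodule.eq_bot_iff]
    rintro v ⟨hvG, hvP⟩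
    rw [graphOf_eq] at hvG
    obtain ⟨c, rfl⟩ := hvG
    have hcz : ∀ g, g ≠ e → c g = 0 := fun g hg => hvP.2 g (by simp [hg])
    have h1 : Matrix.vecMul c A e = 0 := hvP.1 e (by simp)
    have h2 : Matrix.vecMul c A e = c e * A e e := by
      rw [Matrix.vecMul, dotProduct, Finset.sum_eq_single e]
      · intro g _ hg; rw [hcz g hg, zero_mul]
      · intro h; exact absurd (Finset.mem_univ e) h
    have hce : c e = 0 := by rwa [h2, hee, mul_one] at h1
    have hc : c = 0 := funext fun g => by
      by_cases hg : g = e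
      · rw [hg]; exact hce
      · exact hcz g hg
    rw [hc, map_zero]
  · have hee0 : A e e = 0 := by
      have : ∀ a : ZMod 2, a ≠ 1 → a = 0 := by decide
      exact this _ hee
    have hrowex : ∃ e' ∈ U, A e e' ≠ 0 := by
      by_contra hcon
      push_neg at hcon
      have hmem : rowVec A e ∈ graphOf A ⊓ Psub U :=
        ⟨Submodule.subset_span ⟨e, rfl⟩, fun f hf => hcon f hf,
          fun f hf => Pi.single_eq_of_ne (fun h : f = e => hf (h ▸ he)) 1⟩
      rw [hU, Submodule.mem_bot] at hmem
      have := congrFun (congrArg Prod.snd hmem) e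
      simp [rowVec] at this
    obtain ⟨e', he', hAee'⟩ := hrowex
    have hA1 : A e e' = 1 := zmod2_eq_one hAee'
    have hne : e ≠ e' := fun h => hAee' (by rw [← h]; exact hee0)
    refine ⟨e', he', ?_⟩
    rw [Submodule.eq_bot_iff]
    rintro v ⟨hvG, hvP⟩
    rw [graphOf_eq] at hvG
    obtain ⟨c, rfl⟩ := hvG
    have hcz : ∀ g, g ≠ e → g ≠ e' → c g = 0 := fun g hg1 hg2 => hvP.2 g (by simp [hg1, hg2])
    have hsum : ∀ f, Matrix.vecMul c A f = c e * A e f + c e' * A e' f := by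
      intro f
      rw [Matrix.vecMul, dotProduct,
        ← Finset.sum_subset (Finset.subset_univ ({e, e'} : Finset E))
          (fun g _ hg => by
            rw [hcz g (fun h => hg (by simp [h])) (fun h => hg (by simp [h])), zero_mul]),
        Finset.sum_pair hne]
    have h1 : c e * A e e + c e' * A e' e = 0 := by
      rw [← hsum e]; exact hvP.1 e (by simp)
    have h2 : c e * A e e' + c e' * A e' e' = 0 := by
      rw [← hsum e']; exact hvP.1 e' (by simp)
    have hsymm : A e' e = A e e' := hA.apply e e'
    have hce' : c e' = 0 := by
      rw [hee0, mul_zero, zero_add, hsymm, hA1, mul_one] at h1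
      exact h1
    have hce : c e = 0 := by
      rw [hce', zero_mul, add_zero, hA1, mul_one] at h2
      exact h2
    have hc : c = 0 := funext fun g => by
      by_cases hg1 : g = e
      · rw [hg1]; exact hce
      by_cases hg2 : g = e'
      · rw [hg2]; exact hce'
      exact hcz g hg1 hg2
    rw [hc, map_zero]

/-- `ν_E(L)` is a binary delta-matroid: it equals a twist of the
nondegeneracy set system of a symmetric matrix; in particular it is proper and
satisfies the symmetric exchange axiom. -/
theorem stmt9 (L : Submodule (ZMod 2) (V E)) (hL : IsLagrangian L) :
    (∃ (A : Matrix E E (ZMod 2)) (E' : Finset E), A.IsSymm ∧ nu L = (· ∆ E') '' Phi A) ∧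
    (nu L).Nonempty ∧ SEAxiom (nu L) := by
  classical
  have hfeas : ∀ (M : Submodule (ZMod 2) (V E)) (Y : Finset E),
      Feasible M Y ↔ M ⊓ Psub Y = ⊥ := fun M Y => by rw [Feasible, coordSpan_eq]
  have mainA : ∀ Y₀ : Finset E, L ⊓ Psub Y₀ = ⊥ →
      ∃ A : Matrix E E (ZMod 2), A.IsSymm ∧
        ∀ Y, (L ⊓ Psub Y = ⊥ ↔ graphOf A ⊓ Psub (Y ∆ Y₀) = ⊥) := by
    intro Y₀ h₀
    have hempty : ((∅ : Finset E) ∆ Y₀) = Y₀ := by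
      exact bot_symmDiff Y₀
    obtain ⟨A, hAs, hAeq⟩ := graph_rep (L.map (sigmaSet Y₀)) (isLagrangian_map L hL Y₀) (by
      rw [feasible_map, hempty]; exact h₀)
    refine ⟨A, hAs, fun Y => ?_⟩
    rw [← hAeq, feasible_map, symmDiff_symmDiff_cancel_right]
  obtain ⟨E', hE'⟩ := exists_feasible L hL.1
  obtain ⟨A, hAs, hAiff⟩ := mainA E' hE'
  refine ⟨⟨A, E', hAs, ?_⟩, ⟨E', (hfeas L E').mpr hE'⟩, ?_⟩
  · ext Y
    simp only [nu, Set.mem_setOf_eq, Set.mem_image]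
    rw [hfeas, hAiff Y, feasible_graphOf]
    constructor
    · intro h
      exact ⟨Y ∆ E', h, symmDiff_symmDiff_cancel_right E' Y⟩
    · rintro ⟨U, hU, rfl⟩
      rwa [symmDiff_symmDiff_cancel_right]
  · intro φ₁ h₁ φ₂ h₂ e he
    obtain ⟨B, hBs, hBiff⟩ := mainA φ₁ ((hfeas L φ₁).mp h₁)
    have hU : graphOf B ⊓ Psub (φ₂ ∆ φ₁) = ⊥ := (hBiff φ₂).mp ((hfeas L φ₂).mp h₂)
    have he2 : e ∈ φ₂ ∆ φ₁ := by rwa [symmDiff_comm]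
    obtain ⟨e', he', hpair⟩ := exchange_graph B hBs _ hU he2
    refine ⟨e', by rwa [symmDiff_comm] at he', ?_⟩
    show Feasible L (φ₁ ∆ ({e, e'} : Finset E))
    rw [hfeas, hBiff]
    rwa [symmDiff_comm φ₁ ({e, e'} : Finset E), symmDiff_symmDiff_cancel_right]
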